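/- Let B ⊆ Î be a 0-box over an interval J ⊆ I such that B ∩ π₀^{−1}(x) is a Borel subset of Î for every x ∈ J ∖ PC. Then for all a, b ∈ J ∖ PC, α_a(B) = α_b(B). -/

import Mathlib

open Set MeasureTheory ENNReal Topology

noncomputable section

namespace Tent

/-- The core interval `I = [0,1]`. -/
def I : Set ℝ := Set.Icc 0 1

/-- The core tent map of slope `s`, `f(x) = min(s·x + 2 − s, s·(1 − x))`. -/
def f (s : ℝ) (x : ℝ) : ℝ := min (s * x + 2 - s) (s * (1 - x))

/-- The critical point `c = 1 − 1/s`. -/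
def c (s : ℝ) : ℝ := 1 - 1 / s

/-- The post-critical set `PC = {c, f(c), f²(c), …}`. -/
def PC (s : ℝ) : Set ℝ := Set.range fun n => (f s)^[n] (c s)

/-- The inverse limit, as a set of sequences: `x_i ∈ I` and `f(x_{i+1}) = x_i`. -/
def IhatSet (s : ℝ) : Set (ℕ → ℝ) :=
  {x | (∀ i, x i ∈ I) ∧ ∀ i, f s (x (i + 1)) = x i}

/-- The inverse limit space `Î`. -/
abbrev Ihat (s : ℝ) : Type := ↥(IhatSet s)

/-- The metric on `Î`: `d(x,y) = Σ_i |x_i − y_i|/2^i`. -/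
def dHat (s : ℝ) (x y : Ihat s) : ℝ := ∑' i : ℕ, |x.1 i - y.1 i| / 2 ^ i

/-- The shift map on sequences: `x ↦ (f(x₀), x₀, x₁, …)`. -/
def fhatSeq (s : ℝ) (x : ℕ → ℝ) : ℕ → ℝ := fun n => Nat.casesOn n (f s (x 0)) fun k => x k

/-- The image under `f̂ⁿ` of a subset of `Î`. -/
def fhatImage (s : ℝ) (n : ℕ) (K : Set (Ihat s)) : Set (Ihat s) :=
  {y : Ihat s | ∃ x ∈ K, y.1 = (fhatSeq s)^[n] (Subtype.val x)}

/-- The inverse `f̂⁻ⁿ` of the shift homeomorphism: drop the first `n` coordinates. -/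
def fhatInv (s : ℝ) (n : ℕ) (x : Ihat s) : Ihat s :=
  ⟨fun i => x.1 (i + n), fun i => x.2.1 (i + n), fun i => by
    show f s (x.1 (i + 1 + n)) = x.1 (i + n)
    rw [show i + 1 + n = i + n + 1 from by omega]
    exact x.2.2 (i + n)⟩

/-- `γ` is an arc in `Î`: homeomorphic to a nontrivial interval of `ℝ`. -/
def IsArc (s : ℝ) (γ : Set (Ihat s)) : Prop :=
  ∃ J : Set ℝ, J.OrdConnected ∧ J.Nontrivial ∧ Nonempty (γ ≃ₜ J)

/-- `γ` is a closed arc in `Î`: homeomorphic to `[0,1]`. -/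
def IsClosedArc (s : ℝ) (γ : Set (Ihat s)) : Prop := Nonempty (γ ≃ₜ (Set.Icc (0:ℝ) 1))

/-- `γ` is an open arc in `Î`: homeomorphic to `(0,1)`. -/
def IsOpenArc (s : ℝ) (γ : Set (Ihat s)) : Prop := Nonempty (γ ≃ₜ (Set.Ioo (0:ℝ) 1))

/-- `x` is an endpoint of the closed arc `γ`. -/
def IsEndpoint (s : ℝ) (x : Ihat s) (γ : Set (Ihat s)) : Prop :=
  ∃ (e : γ ≃ₜ (Set.Icc (0:ℝ) 1)) (hx : x ∈ γ), (e ⟨x, hx⟩).1 = 0 ∨ (e ⟨x, hx⟩).1 = 1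

/-- `γ` is `m`-flat over the nontrivial interval `J ⊆ I`: the projection `π_m`
restricted to `γ` is a homeomorphism onto `J`. -/
def MFlatOver (s : ℝ) (m : ℕ) (γ : Set (Ihat s)) (J : Set ℝ) : Prop :=
  J ⊆ I ∧ J.OrdConnected ∧ J.Nontrivial ∧
    ∃ e : γ ≃ₜ J, ∀ x : γ, (e x).1 = x.1.1 m

/-- `γ` is an `m`-flat arc. -/
def IsMFlat (s : ℝ) (m : ℕ) (γ : Set (Ihat s)) : Prop := ∃ J : Set ℝ, MFlatOver s m γ J

/-- `γ` is a flat arc: `m`-flat for some `m ≥ 0`. -/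
def IsFlat (s : ℝ) (γ : Set (Ihat s)) : Prop := ∃ m : ℕ, IsMFlat s m γ

/-- `γ` is a flat closed arc. -/
def IsFlatClosedArc (s : ℝ) (γ : Set (Ihat s)) : Prop := IsClosedArc s γ ∧ IsFlat s γ

/-- `p 0, …, p k` occur in order along the closed arc `γ` (from one endpoint to the other). -/
def InOrderAlong (s : ℝ) (γ : Set (Ihat s)) (k : ℕ) (p : ℕ → Ihat s) : Prop :=
  ∃ (e : γ ≃ₜ (Set.Icc (0:ℝ) 1)) (t : ℕ → Set.Icc (0:ℝ) 1),
    (∀ i j, i ≤ j → j ≤ k → t i ≤ t j) ∧ ∀ i ≤ k, (e.symm (t i)).1 = p i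

/-- The arclength of a closed arc `γ` in the metric `d`: the supremum over finite
sequences of points occurring in order along `γ` of the sums of successive distances. -/
def arcLength (s : ℝ) (γ : Set (Ihat s)) : ℝ≥0∞ :=
  ⨆ (k : ℕ) (p : ℕ → Ihat s) (_ : InOrderAlong s γ k p),
    ENNReal.ofReal (∑ i ∈ Finset.range k, dHat s (p i) (p (i + 1)))

/-- A continuum: a compact connected subset of `Î` with more than one point. -/
def IsContinuum (s : ℝ) (K : Set (Ihat s)) : Prop :=
  IsCompact K ∧ IsConnected K ∧ K.Nontrivial

/-- `K` is `ε`-dense in `Î`. -/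
def EpsDense (s : ℝ) (ε : ℝ) (K : Set (Ihat s)) : Prop :=
  ∀ x : Ihat s, ∃ y ∈ K, dHat s x y ≤ ε

/-- `S` is metrically infinite: contains flat closed arcs of arbitrarily large length. -/
def MetricallyInfinite (s : ℝ) (S : Set (Ihat s)) : Prop :=
  ∀ N : ℝ, 0 < N → ∃ γ : Set (Ihat s), γ ⊆ S ∧ IsFlatClosedArc s γ ∧
    ENNReal.ofReal N < arcLength s γ

/-- An arc is bi-dense if, for some point `p` in it, both connected components of
`γ ∖ {p}` are dense in `Î`. -/
def BiDense (s : ℝ) (γ : Set (Ihat s)) : Prop :=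
  ∃ p ∈ γ, ∀ q ∈ γ \ {p}, Dense (connectedComponentIn (γ \ {p}) q)

/-- An arc is metrically bi-infinite if, for some point `p` in it, both connected
components of `γ ∖ {p}` are metrically infinite. -/
def MetricallyBiInfinite (s : ℝ) (γ : Set (Ihat s)) : Prop :=
  ∃ p ∈ γ, ∀ q ∈ γ \ {p}, MetricallyInfinite s (connectedComponentIn (γ \ {p}) q)

/-- `x` is globally leaf regular: its path component is a bi-dense, metrically
bi-infinite open arc. -/
def GloballyLeafRegular (s : ℝ) (x : Ihat s) : Prop :=
  IsOpenArc s (pathComponent x) ∧ BiDense s (pathComponent x) ∧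
    MetricallyBiInfinite s (pathComponent x)

/-- A `0`-box over `J`: a union of arcs, each `0`-flat over `J`. -/
def ZeroBoxOver (s : ℝ) (B : Set (Ihat s)) (J : Set ℝ) : Prop :=
  ∃ A : Set (Set (Ihat s)), (∀ γ ∈ A, MFlatOver s 0 γ J) ∧ B = ⋃₀ A

/-- An `m`-box over `J`: `f̂⁻ᵐ(B)` is a `0`-box over `J`. -/
def MBoxOver (s : ℝ) (m : ℕ) (B : Set (Ihat s)) (J : Set ℝ) : Prop :=
  ZeroBoxOver s (fhatInv s m '' B) J

/-- The maximal `m`-box over `J`: the union of all arcs `m`-flat over `J`. -/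
def maximalMBox (s : ℝ) (m : ℕ) (J : Set ℝ) : Set (Ihat s) :=
  ⋃₀ {γ : Set (Ihat s) | MFlatOver s m γ J}

/-- The point cylinder `[y₀, …, y_n]`. -/
def pointCyl (s : ℝ) (y : ℕ → ℝ) (n : ℕ) : Set (Ihat s) :=
  {z : Ihat s | ∀ i ≤ n, z.1 i = y i}

/-! ### Basic lemmas about the tent map -/

section Basic

variable {s : ℝ}

lemma one_lt_s (hs₁ : Real.sqrt 2 < s) : 1 < s := by
  have h : (1:ℝ) = Real.sqrt 1 := (Real.sqrt_one).symm
  have : Real.sqrt 1 < Real.sqrt 2 := Real.sqrt_lt_sqrt (by norm_num) (by norm_num)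
  linarith [this, hs₁, h ▸ this]

lemma c_pos (hs : 1 < s) : 0 < c s := by
  have hs0 : 0 < s := by linarith
  have : 1 / s < 1 := by rw [div_lt_one hs0]; exact hs
  unfold c; linarith

lemma c_lt_one (hs : 0 < s) : c s < 1 := by
  have : 0 < 1 / s := by positivity
  unfold c; linarith

lemma c_mem_I (hs : 1 < s) : c s ∈ I :=
  ⟨le_of_lt (c_pos hs), le_of_lt (c_lt_one (by linarith))⟩

lemma f_eq_left (hs : 0 < s) {x : ℝ} (hx : x ≤ c s) : f s x = s * x + 2 - s := by
  unfold f
  apply min_eq_left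
  have h1 : s * x ≤ s * (c s) := by nlinarith
  have h2 : s * c s = s - 1 := by unfold c; field_simp
  nlinarith

lemma f_eq_right (hs : 0 < s) {x : ℝ} (hx : c s ≤ x) : f s x = s * (1 - x) := by
  unfold f
  apply min_eq_right
  have h1 : s * (c s) ≤ s * x := by nlinarith
  have h2 : s * c s = s - 1 := by unfold c; field_simp
  nlinarith

lemma f_c (hs : 0 < s) : f s (c s) = 1 := by
  rw [f_eq_right hs le_rfl]
  unfold c; field_simp; ring

lemma f_le_one {x : ℝ} (hs : 1 < s) : f s x ≤ 1 := by
  have hs0 : 0 < s := by linarith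
  rcases le_total x (c s) with h | h
  · rw [f_eq_left hs0 h]
    have h2 : s * c s = s - 1 := by unfold c; field_simp
    nlinarith
  · rw [f_eq_right hs0 h]
    have : 1 - x ≤ 1 - c s := by linarith
    have h2 : s * (1 - c s) = 1 := by unfold c; field_simp; ring
    nlinarith

lemma f_mem_I (hs : 1 < s) (hs₂ : s < 2) {x : ℝ} (hx : x ∈ I) : f s x ∈ I := by
  obtain ⟨hx0, hx1⟩ := hx
  constructor
  · rcases le_total x (c s) with h | h
    · rw [f_eq_left (by linarith) h]; nlinarith
    · rw [f_eq_right (by linarith) h]; nlinarith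
  · exact f_le_one hs

lemma iter_mem_I (hs : 1 < s) (hs₂ : s < 2) {x : ℝ} (hx : x ∈ I) (n : ℕ) :
    (f s)^[n] x ∈ I := by
  induction n with
  | zero => simpa using hx
  | succ n ih => rw [Function.iterate_succ_apply']; exact f_mem_I hs hs₂ ih

lemma f_lip (hs : 0 < s) (x y : ℝ) : |f s x - f s y| ≤ s * |x - y| := by
  have h1 : |(s * x + 2 - s) - (s * y + 2 - s)| = s * |x - y| := by
    rw [show (s * x + 2 - s) - (s * y + 2 - s) = s * (x - y) by ring, abs_mul,
      abs_of_pos hs]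
  have h2 : |(s * (1 - x)) - (s * (1 - y))| = s * |x - y| := by
    rw [show (s * (1 - x)) - (s * (1 - y)) = s * (y - x) by ring, abs_mul,
      abs_of_pos hs, abs_sub_comm]
  unfold f
  rw [abs_sub_le_iff]
  constructor
  · rcases min_cases (s * y + 2 - s) (s * (1 - y)) with ⟨h, _⟩ | ⟨h, _⟩
    · rw [h]
      calc min (s * x + 2 - s) (s * (1 - x)) - (s * y + 2 - s)
          ≤ (s * x + 2 - s) - (s * y + 2 - s) := by
            have := min_le_left (s * x + 2 - s) (s * (1 - x)); linarith
        _ ≤ s * |x - y| := by nlinarith [le_abs_self ((s * x + 2 - s) - (s * y + 2 - s)), h1]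
    · rw [h]
      calc min (s * x + 2 - s) (s * (1 - x)) - (s * (1 - y))
          ≤ (s * (1 - x)) - (s * (1 - y)) := by
            have := min_le_right (s * x + 2 - s) (s * (1 - x)); linarith
        _ ≤ s * |x - y| := by nlinarith [le_abs_self ((s * (1 - x)) - (s * (1 - y))), h2]
  · rcases min_cases (s * x + 2 - s) (s * (1 - x)) with ⟨h, _⟩ | ⟨h, _⟩
    · rw [h]
      calc min (s * y + 2 - s) (s * (1 - y)) - (s * x + 2 - s)
          ≤ (s * y + 2 - s) - (s * x + 2 - s) := by
            have := min_le_left (s * y + 2 - s) (s * (1 - y)); linarith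
        _ ≤ s * |x - y| := by nlinarith [le_abs_self ((s * y + 2 - s) - (s * x + 2 - s)), h1, abs_sub_comm ((s * x + 2 - s)) ((s * y + 2 - s))]
    · rw [h]
      calc min (s * y + 2 - s) (s * (1 - y)) - (s * (1 - x))
          ≤ (s * (1 - y)) - (s * (1 - x)) := by
            have := min_le_right (s * y + 2 - s) (s * (1 - y)); linarith
        _ ≤ s * |x - y| := by nlinarith [le_abs_self ((s * (1 - y)) - (s * (1 - x))), h2, abs_sub_comm (s * (1 - x)) (s * (1 - y))]

lemma f_cont : Continuous (f s) := by
  unfold f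
  exact Continuous.min (by continuity) (by continuity)

lemma iter_cont (n : ℕ) : Continuous ((f s)^[n]) := by
  induction n with
  | zero => simpa using continuous_id
  | succ n ih => rw [Function.iterate_succ]; exact ih.comp f_cont

end Basic
/-! ### One-sided behaviour of iterates, folds, local injectivity -/

section Analysis

variable {s : ℝ}

/-- One-sided monotone-type control of iterates of the tent map. -/
lemma oneSided (hs : 1 < s) (hs₂ : s < 2) :
    ∀ m : ℕ, ∀ v ∈ I,
    (∃ η > (0:ℝ), (∀ x ∈ I, v - η ≤ x → x ≤ v → (f s)^[m] x ≤ (f s)^[m] v) ∨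
              (∀ x ∈ I, v - η ≤ x → x ≤ v → (f s)^[m] v ≤ (f s)^[m] x)) ∧
    (∃ η > (0:ℝ), (∀ x ∈ I, v ≤ x → x ≤ v + η → (f s)^[m] x ≤ (f s)^[m] v) ∨
              (∀ x ∈ I, v ≤ x → x ≤ v + η → (f s)^[m] v ≤ (f s)^[m] x)) := by
  have hs0 : (0:ℝ) < s := by linarith
  intro m
  induction m with
  | zero =>
    intro v hv
    constructor
    · exact ⟨1, one_pos, Or.inl (by intro x _ _ h2; simpa using h2)⟩
    · exact ⟨1, one_pos, Or.inr (by intro x _ h1 _; simpa using h1)⟩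
  | succ m ih =>
    intro v hv
    have hfv : f s v ∈ I := f_mem_I hs hs₂ hv
    constructor
    · -- left side
      rcases le_or_gt v (c s) with hvc | hvc
      · -- v ≤ c : f increasing on the left of v, left ↦ left at f v
        obtain ⟨η', hη', hd⟩ := (ih (f s v) hfv).1
        refine ⟨η' / s, by positivity, ?_⟩
        have key : ∀ x ∈ I, v - η' / s ≤ x → x ≤ v →
            f s x ∈ I ∧ f s v - η' ≤ f s x ∧ f s x ≤ f s v := by
          intro x hx h1 h2
          have hxc : x ≤ c s := le_trans h2 hvc
          rw [f_eq_left hs0 hxc, f_eq_left hs0 hvc]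
          refine ⟨by rw [← f_eq_left hs0 hxc]; exact f_mem_I hs hs₂ hx, ?_, ?_⟩
          · have : s * (v - x) ≤ s * (η' / s) := by
              apply mul_le_mul_of_nonneg_left _ (le_of_lt hs0); linarith
            rw [mul_div_cancel₀ _ (ne_of_gt hs0)] at this
            nlinarith
          · nlinarith
        rcases hd with hd | hd
        · refine Or.inl ?_
          intro x hx h1 h2
          have ⟨hfx, ha, hb⟩ := key x hx h1 h2
          rw [Function.iterate_succ_apply, Function.iterate_succ_apply]
          exact hd (f s x) hfx ha hb
        · refine Or.inr ?_
          intro x hx h1 h2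
          have ⟨hfx, ha, hb⟩ := key x hx h1 h2
          rw [Function.iterate_succ_apply, Function.iterate_succ_apply]
          exact hd (f s x) hfx ha hb
      · -- v > c : f decreasing near v on the left; left ↦ right at f v
        obtain ⟨η', hη', hd⟩ := (ih (f s v) hfv).2
        refine ⟨min (η' / s) (v - c s), lt_min (by positivity) (by linarith), ?_⟩
        have key : ∀ x ∈ I, v - min (η' / s) (v - c s) ≤ x → x ≤ v →
            f s x ∈ I ∧ f s v ≤ f s x ∧ f s x ≤ f s v + η' := by
          intro x hx h1 h2
          have hxc : c s ≤ x := by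
            have := min_le_right (η' / s) (v - c s); linarith
          rw [f_eq_right hs0 hxc, f_eq_right hs0 (le_of_lt hvc)]
          refine ⟨by rw [← f_eq_right hs0 hxc]; exact f_mem_I hs hs₂ hx, by nlinarith, ?_⟩
          · have h3 : v - x ≤ η' / s := by
              have := min_le_left (η' / s) (v - c s); linarith
            have : s * (v - x) ≤ s * (η' / s) := by
              apply mul_le_mul_of_nonneg_left _ (le_of_lt hs0); linarith
            rw [mul_div_cancel₀ _ (ne_of_gt hs0)] at this
            nlinarith
        rcases hd with hd | hd
        · refine Or.inl ?_
          intro x hx h1 h2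
          have ⟨hfx, ha, hb⟩ := key x hx h1 h2
          rw [Function.iterate_succ_apply, Function.iterate_succ_apply]
          exact hd (f s x) hfx ha hb
        · refine Or.inr ?_
          intro x hx h1 h2
          have ⟨hfx, ha, hb⟩ := key x hx h1 h2
          rw [Function.iterate_succ_apply, Function.iterate_succ_apply]
          exact hd (f s x) hfx ha hb
    · -- right side
      rcases lt_or_ge v (c s) with hvc | hvc
      · -- v < c : f increasing near v on the right; right ↦ right at f v
        obtain ⟨η', hη', hd⟩ := (ih (f s v) hfv).2
        refine ⟨min (η' / s) (c s - v), lt_min (by positivity) (by linarith), ?_⟩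
        have key : ∀ x ∈ I, v ≤ x → x ≤ v + min (η' / s) (c s - v) →
            f s x ∈ I ∧ f s v ≤ f s x ∧ f s x ≤ f s v + η' := by
          intro x hx h1 h2
          have hxc : x ≤ c s := by
            have := min_le_right (η' / s) (c s - v); linarith
          rw [f_eq_left hs0 hxc, f_eq_left hs0 (le_of_lt hvc)]
          refine ⟨by rw [← f_eq_left hs0 hxc]; exact f_mem_I hs hs₂ hx, by nlinarith, ?_⟩
          · have h3 : x - v ≤ η' / s := by
              have := min_le_left (η' / s) (c s - v); linarith
            have : s * (x - v) ≤ s * (η' / s) := by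
              apply mul_le_mul_of_nonneg_left _ (le_of_lt hs0); linarith
            rw [mul_div_cancel₀ _ (ne_of_gt hs0)] at this
            nlinarith
        rcases hd with hd | hd
        · refine Or.inl ?_
          intro x hx h1 h2
          have ⟨hfx, ha, hb⟩ := key x hx h1 h2
          rw [Function.iterate_succ_apply, Function.iterate_succ_apply]
          exact hd (f s x) hfx ha hb
        · refine Or.inr ?_
          intro x hx h1 h2
          have ⟨hfx, ha, hb⟩ := key x hx h1 h2
          rw [Function.iterate_succ_apply, Function.iterate_succ_apply]
          exact hd (f s x) hfx ha hb
      · -- v ≥ c : f decreasing on the right of v; right ↦ left at f v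
        obtain ⟨η', hη', hd⟩ := (ih (f s v) hfv).1
        refine ⟨η' / s, by positivity, ?_⟩
        have key : ∀ x ∈ I, v ≤ x → x ≤ v + η' / s →
            f s x ∈ I ∧ f s v - η' ≤ f s x ∧ f s x ≤ f s v := by
          intro x hx h1 h2
          have hxc : c s ≤ x := le_trans hvc h1
          rw [f_eq_right hs0 hxc, f_eq_right hs0 hvc]
          refine ⟨by rw [← f_eq_right hs0 hxc]; exact f_mem_I hs hs₂ hx, ?_, by nlinarith⟩
          · have : s * (x - v) ≤ s * (η' / s) := by
              apply mul_le_mul_of_nonneg_left _ (le_of_lt hs0); linarith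
            rw [mul_div_cancel₀ _ (ne_of_gt hs0)] at this
            nlinarith
        rcases hd with hd | hd
        · refine Or.inl ?_
          intro x hx h1 h2
          have ⟨hfx, ha, hb⟩ := key x hx h1 h2
          rw [Function.iterate_succ_apply, Function.iterate_succ_apply]
          exact hd (f s x) hfx ha hb
        · refine Or.inr ?_
          intro x hx h1 h2
          have ⟨hfx, ha, hb⟩ := key x hx h1 h2
          rw [Function.iterate_succ_apply, Function.iterate_succ_apply]
          exact hd (f s x) hfx ha hb

/-- The fold lemma: near a precritical point, a high iterate maps everything to
one side of the image of the point. -/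
lemma fold (hs : 1 < s) (hs₂ : s < 2) {u : ℝ} (hu : u ∈ I) {j n : ℕ} (hj : j < n)
    (hc : (f s)^[j] u = c s) :
    ∃ δ > (0:ℝ), (∀ x ∈ I, |x - u| ≤ δ → (f s)^[n] x ≤ (f s)^[n] u) ∨
           (∀ x ∈ I, |x - u| ≤ δ → (f s)^[n] u ≤ (f s)^[n] x) := by
  have hs0 : (0:ℝ) < s := by linarith
  set m := n - (j + 1) with hm
  have hn : n = m + (j + 1) := by omega
  have hone : (1:ℝ) ∈ I := ⟨zero_le_one, le_rfl⟩
  obtain ⟨η, hη, hd⟩ := (oneSided hs hs₂ m 1 hone).1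
  have hu1 : (f s)^[j+1] u = 1 := by
    rw [Function.iterate_succ_apply', hc]; exact f_c hs0
  -- continuity of the (j+1)-st iterate at u
  have hcont : ContinuousAt ((f s)^[j+1]) u := (iter_cont (j+1)).continuousAt
  rw [Metric.continuousAt_iff] at hcont
  obtain ⟨δ, hδ, hball⟩ := hcont η hη
  refine ⟨δ / 2, by positivity, ?_⟩
  have key : ∀ x ∈ I, |x - u| ≤ δ / 2 →
      (f s)^[j+1] x ∈ I ∧ 1 - η ≤ (f s)^[j+1] x ∧ (f s)^[j+1] x ≤ 1 := by
    intro x hx hxd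
    have h1 : dist x u < δ := by rw [Real.dist_eq]; linarith [abs_nonneg (x - u)]
    have h2 := hball h1
    rw [Real.dist_eq, hu1] at h2
    have h2' := abs_le.1 (le_of_lt h2)
    refine ⟨iter_mem_I hs hs₂ hx _, by linarith [h2'.1], ?_⟩
    rw [Function.iterate_succ_apply']
    exact f_le_one hs
  have hiter : ∀ x : ℝ, (f s)^[n] x = (f s)^[m] ((f s)^[j+1] x) := by
    intro x; rw [hn, Function.iterate_add_apply]
  rcases hd with hd | hd
  · refine Or.inl ?_
    intro x hx hxd
    obtain ⟨hI, h1, h2⟩ := key x hx hxd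
    rw [hiter, hiter, hu1]
    exact hd _ hI h1 h2
  · refine Or.inr ?_
    intro x hx hxd
    obtain ⟨hI, h1, h2⟩ := key x hx hxd
    rw [hiter, hiter, hu1]
    exact hd _ hI h1 h2

/-- Local injectivity of iterates at points whose orbit avoids the critical point. -/
lemma inj_iter (hs : 1 < s) (hs₂ : s < 2) :
    ∀ n : ℕ, ∀ u ∈ I, (∀ j < n, (f s)^[j] u ≠ c s) →
    ∃ δ > (0:ℝ), ∀ x ∈ I, ∀ y ∈ I, |x - u| ≤ δ → |y - u| ≤ δ →
      (f s)^[n] x = (f s)^[n] y → x = y := by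
  have hs0 : (0:ℝ) < s := by linarith
  intro n
  induction n with
  | zero =>
    intro u hu _
    exact ⟨1, one_pos, fun x _ y _ _ _ h => by simpa using h⟩
  | succ n ih =>
    intro u hu h
    have huc : u ≠ c s := by simpa using h 0 (Nat.succ_pos n)
    have hfu : f s u ∈ I := f_mem_I hs hs₂ hu
    have h' : ∀ j < n, (f s)^[j] (f s u) ≠ c s := by
      intro j hj
      have := h (j + 1) (by omega)
      rwa [Function.iterate_succ_apply] at this
    obtain ⟨δ₁, hδ₁, hinj⟩ := ih (f s u) hfu h'
    have habs : 0 < |u - c s| := abs_pos.2 (sub_ne_zero.2 huc)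
    refine ⟨min (δ₁ / s) (|u - c s|), lt_min (by positivity) habs, ?_⟩
    intro x hx y hy hxd hyd heq
    -- x and y are on the same branch as u
    have hbranch : ∀ z : ℝ, |z - u| ≤ min (δ₁ / s) (|u - c s|) →
        (u < c s → z ≤ c s) ∧ (c s < u → c s ≤ z) := by
      intro z hz
      have h1 := (abs_le.1 (le_trans hz (min_le_right _ _))).1
      have h2 := (abs_le.1 (le_trans hz (min_le_right _ _))).2
      constructor
      · intro hlt
        have habs2 : |u - c s| = c s - u := by
          rw [abs_of_neg (by linarith : u - c s < 0)]; ring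
        linarith [h2, habs2.ge, habs2.le]
      · intro hlt
        have habs2 : |u - c s| = u - c s := abs_of_pos (by linarith)
        linarith [h1, habs2.ge, habs2.le]
    have hfd : ∀ z : ℝ, |z - u| ≤ min (δ₁ / s) (|u - c s|) → |f s z - f s u| ≤ δ₁ := by
      intro z hz
      have h1 : |f s z - f s u| ≤ s * |z - u| := f_lip hs0 z u
      have h2 : |z - u| ≤ δ₁ / s := le_trans hz (min_le_left _ _)
      have h3 : s * |z - u| ≤ s * (δ₁ / s) := by nlinarith [abs_nonneg (z - u)]
      rw [mul_div_cancel₀ _ (ne_of_gt hs0)] at h3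
      linarith
    have hfeq : f s x = f s y := by
      apply hinj (f s x) (f_mem_I hs hs₂ hx) (f s y) (f_mem_I hs hs₂ hy)
        (hfd x hxd) (hfd y hyd)
      rw [← Function.iterate_succ_apply, ← Function.iterate_succ_apply]
      exact heq
    -- branch injectivity
    rcases lt_or_gt_of_ne huc with hlt | hgt
    · have hxc : x ≤ c s := (hbranch x hxd).1 hlt
      have hyc : y ≤ c s := (hbranch y hyd).1 hlt
      rw [f_eq_left hs0 hxc, f_eq_left hs0 hyc] at hfeq
      nlinarith [hfeq]
    · have hxc : c s ≤ x := (hbranch x hxd).2 hgt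
      have hyc : c s ≤ y := (hbranch y hyd).2 hgt
      rw [f_eq_right hs0 hxc, f_eq_right hs0 hyc] at hfeq
      nlinarith [hfeq]

/-- Points of the postcritical set are mapped into it. -/
lemma pc_iter {x : ℝ} (hx : x ∈ PC s) (n : ℕ) : (f s)^[n] x ∈ PC s := by
  obtain ⟨k, hk⟩ := hx
  simp only at hk
  exact ⟨n + k, by simp only [Function.iterate_add_apply, hk]⟩

/-- If the `n`-th image of `u` avoids `PC`, then the orbit of `u` avoids `c` before time `n`. -/
lemma not_precrit {u : ℝ} {n : ℕ} (h : (f s)^[n] u ∉ PC s) :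
    ∀ j < n, (f s)^[j] u ≠ c s := by
  intro j hj hc
  apply h
  have : (f s)^[n] u = (f s)^[n - j] ((f s)^[j] u) := by
    rw [← Function.iterate_add_apply]
    congr 1; omega
  rw [this, hc]
  exact ⟨n - j, rfl⟩

/-- Finiteness of iterated preimages of a point. -/
lemma preim_finite (hs0 : 0 < s) (x : ℝ) : ∀ n : ℕ, {y : ℝ | (f s)^[n] y = x}.Finite := by
  intro n
  induction n generalizing x with
  | zero => simpa using Set.finite_singleton x
  | succ n ih =>
    have hsub : {y : ℝ | (f s)^[n+1] y = x} ⊆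
        ⋃ z ∈ {z : ℝ | (f s)^[n] z = x}, {y : ℝ | f s y = z} := by
      intro y hy
      simp only [Set.mem_setOf_eq, Set.mem_iUnion] at *
      exact ⟨f s y, by rwa [← Function.iterate_succ_apply], rfl⟩
    refine Set.Finite.subset (Set.Finite.biUnion (ih x) ?_) hsub
    intro z _
    have : {y : ℝ | f s y = z} ⊆ {(z - 2 + s) / s, 1 - z / s} := by
      intro y hy
      simp only [Set.mem_setOf_eq] at hy
      rcases min_cases (s * y + 2 - s) (s * (1 - y)) with ⟨hm, _⟩ | ⟨hm, _⟩ <;>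
        rw [f, hm] at hy
      · left; field_simp; linarith
      · right; show y = 1 - z / s; rw [← hy, mul_div_cancel_left₀ _ (ne_of_gt hs0)]; ring
    exact Set.Finite.subset ((Set.finite_singleton _).insert _) this

end Analysis
/-! ### Inverse limit basics -/

section IhatBasics

variable {s : ℝ}

lemma ihat_iter (z : Ihat s) (m : ℕ) : ∀ k : ℕ, (f s)^[k] (z.1 (m + k)) = z.1 m := by
  intro k
  induction k with
  | zero => rfl
  | succ k ih =>
    rw [show m + (k+1) = (m + k) + 1 by omega, Function.iterate_succ_apply, z.2.2 (m+k)]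
    exact ih

lemma coord_proj (z : Ihat s) {m n : ℕ} (h : m ≤ n) :
    (f s)^[n - m] (z.1 n) = z.1 m := by
  have := ihat_iter z m (n - m)
  rwa [show m + (n - m) = n by omega] at this

/-- The basic cylinder: points whose `n`-th coordinate is `v`. -/
def cylv (s : ℝ) (n : ℕ) (v : ℝ) : Set (Ihat s) := {z : Ihat s | z.1 n = v}

lemma cylv_closed (n : ℕ) (v : ℝ) : IsClosed (cylv s n v) := by
  have hcont : Continuous (fun z : Ihat s => z.1 n) :=
    (continuous_apply n).comp continuous_subtype_val
  exact isClosed_eq hcont continuous_const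

example : BorelSpace (Ihat s) := inferInstance
example : TopologicalSpace.PseudoMetrizableSpace (Ihat s) := inferInstance
example (μ : Measure (Ihat s)) [IsFiniteMeasure μ] : μ.WeaklyRegular := inferInstance

lemma cylv_meas (n : ℕ) (v : ℝ) : MeasurableSet (cylv s n v) :=
  (cylv_closed n v).measurableSet

lemma measure_cylv (hs : 1 < s) (hs₂ : s < 2) {φ : ℝ → ℝ} {α : ℝ → Measure (Ihat s)}
    (hαcyl : ∀ x ∈ I \ PC s, ∀ (y : ℕ → ℝ) (n : ℕ), y 0 = x →
      (∀ i ≤ n, y i ∈ I) → (∀ i < n, f s (y (i + 1)) = y i) →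
      α x (pointCyl s y n) = ENNReal.ofReal (φ (y n) / s ^ n))
    {x v : ℝ} (hx : x ∈ I \ PC s) (hv : v ∈ I) (n : ℕ) (hfv : (f s)^[n] v = x) :
    α x (cylv s n v) = ENNReal.ofReal (φ v / s ^ n) := by
  set y : ℕ → ℝ := fun i => (f s)^[n - i] v with hy
  have hy0 : y 0 = x := by simp only [hy, Nat.sub_zero]; exact hfv
  have hyI : ∀ i ≤ n, y i ∈ I := fun i _ => iter_mem_I hs hs₂ hv _
  have hychain : ∀ i < n, f s (y (i + 1)) = y i := by
    intro i hi
    simp only [hy]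
    rw [← Function.iterate_succ_apply' (f s) (n - (i+1)) v]
    congr 1
    omega
  have hcyl : pointCyl s y n = cylv s n v := by
    ext z
    constructor
    · intro h
      have := h n le_rfl
      simpa only [hy, Nat.sub_self, Function.iterate_zero_apply, cylv, Set.mem_setOf_eq] using this
    · intro h i hi
      have h1 : (f s)^[n - i] (z.1 n) = z.1 i := coord_proj z hi
      have h2 : z.1 n = v := h
      simp only [hy]
      rw [← h2, h1]
  have hyn : y n = v := by simp [hy]
  rw [← hcyl, hαcyl x hx y n hy0 hyI hychain, hyn]

end IhatBasics
/-! ### Uniqueness of continuous sections through a non-postcritical point -/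

section Sections

variable {s : ℝ} {J : Set ℝ}

/-- The non-extreme points of `J`. -/
def npts (J : Set ℝ) : Set ℝ := {r | r ∈ J ∧ ∃ t₁ ∈ J, ∃ t₂ ∈ J, t₁ < r ∧ r < t₂}

lemma npts_subset : npts J ⊆ J := fun _ h => h.1

lemma npts_ordConn (hJoc : J.OrdConnected) : (npts J).OrdConnected := by
  constructor
  intro x hx y hy z hz
  refine ⟨hJoc.out hx.1 hy.1 hz, ?_⟩
  obtain ⟨_, t₁, ht₁, _, _, hlt₁, _⟩ := hx
  obtain ⟨_, _, _, t₂, ht₂, _, hlt₂⟩ := hy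
  exact ⟨t₁, ht₁, t₂, ht₂, lt_of_lt_of_le hlt₁ hz.1, lt_of_le_of_lt hz.2 hlt₂⟩

lemma pick_between {t w : ℝ} (hne : t ≠ w) {ε : ℝ} (hε : 0 < ε) :
    ∃ r, |r - t| < ε ∧ (t < r ∧ r < w ∨ w < r ∧ r < t) := by
  rcases lt_or_gt_of_ne hne with h | h
  · refine ⟨t + min (ε/2) ((w - t)/2), ?_, Or.inl ⟨?_, ?_⟩⟩
    · rw [add_sub_cancel_left, abs_of_pos (lt_min (by linarith) (by linarith))]
      calc min (ε/2) ((w-t)/2) ≤ ε/2 := min_le_left _ _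
        _ < ε := by linarith
    · have := lt_min (show (0:ℝ) < ε/2 by linarith) (show (0:ℝ) < (w-t)/2 by linarith)
      linarith
    · have := min_le_right (ε/2) ((w-t)/2); linarith
  · refine ⟨t - min (ε/2) ((t - w)/2), ?_, Or.inr ⟨?_, ?_⟩⟩
    · rw [sub_sub_cancel_left, abs_neg, abs_of_pos (lt_min (by linarith) (by linarith))]
      calc min (ε/2) ((t-w)/2) ≤ ε/2 := min_le_left _ _
        _ < ε := by linarith
    · have := min_le_right (ε/2) ((t - w)/2); linarith
    · have := lt_min (show (0:ℝ) < ε/2 by linarith) (show (0:ℝ) < (t-w)/2 by linarith)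
      linarith

/-- Two continuous sections of `π₀` over `J` that agree at depth `n` over one good
point of `J` agree at depth `n` everywhere. -/
lemma section_eq (hs : 1 < s) (hs₂ : s < 2) (hJoc : J.OrdConnected) (hJnt : J.Nontrivial)
    {σ σ' : ↥J → Ihat s} (hσ : Continuous σ) (hσ' : Continuous σ')
    (h0 : ∀ r : ↥J, (σ r).1 0 = (r:ℝ)) (h0' : ∀ r : ↥J, (σ' r).1 0 = (r:ℝ))
    (n : ℕ) (t : ↥J) (ht : (t:ℝ) ∉ PC s ∨ (t:ℝ) ∈ npts J)
    (heq : (σ t).1 n = (σ' t).1 n) :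
    ∀ t' : ↥J, (σ t').1 n = (σ' t').1 n := by
  set g : ↥J → ℝ := fun r => (σ r).1 n with hgdef
  set g' : ↥J → ℝ := fun r => (σ' r).1 n with hg'def
  have hgc : Continuous g := (continuous_apply n).comp (continuous_subtype_val.comp hσ)
  have hg'c : Continuous g' := (continuous_apply n).comp (continuous_subtype_val.comp hσ')
  have hsec : ∀ r : ↥J, (f s)^[n] (g r) = (r:ℝ) := by
    intro r
    have := coord_proj (σ r) (Nat.zero_le n)
    rw [Nat.sub_zero] at this
    rw [hgdef]; simp only
    rw [this, h0 r]
  have hsec' : ∀ r : ↥J, (f s)^[n] (g' r) = (r:ℝ) := by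
    intro r
    have := coord_proj (σ' r) (Nat.zero_le n)
    rw [Nat.sub_zero] at this
    rw [hg'def]; simp only
    rw [this, h0' r]
  have hgI : ∀ r : ↥J, g r ∈ I := fun r => (σ r).2.1 n
  have hg'I : ∀ r : ↥J, g' r ∈ I := fun r => (σ' r).2.1 n
  -- over non-extreme points, the section has no precritical values
  have hnpc : ∀ r : ↥J, (r:ℝ) ∈ npts J → ∀ j < n, (f s)^[j] (g r) ≠ c s := by
    intro r hr j hj hc
    obtain ⟨δ, hδ, hside⟩ := fold hs hs₂ (hgI r) hj hc
    have hca : ContinuousAt g r := hgc.continuousAt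
    rw [Metric.continuousAt_iff] at hca
    obtain ⟨ε, hε, hball⟩ := hca δ hδ
    obtain ⟨hrJ, t₁, ht₁, t₂, ht₂, hlt₁, hlt₂⟩ := hr
    rcases hside with hside | hside
    · -- everything near `g r` maps below `r`; take a point of J slightly above r
      have hq : ∃ q ∈ J, (r:ℝ) < q ∧ q - (r:ℝ) < ε := by
        refine ⟨min t₂ ((r:ℝ) + ε/2), ?_, ?_, ?_⟩
        · exact hJoc.out hrJ ht₂ ⟨le_min (le_of_lt hlt₂) (by linarith), min_le_left _ _⟩
        · exact lt_min hlt₂ (by linarith)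
        · have := min_le_right t₂ ((r:ℝ) + ε/2); linarith
      obtain ⟨q, hqJ, hq1, hq2⟩ := hq
      set q' : ↥J := ⟨q, hqJ⟩
      have hd : dist q' r < ε := by
        rw [Subtype.dist_eq, Real.dist_eq, abs_of_pos (by simpa using hq1 : (0:ℝ) < q - r)]
        simpa using hq2
      have := hside (g q') (hgI q') (le_of_lt (by rw [← Real.dist_eq]; exact hball hd))
      rw [hsec q', hsec r] at this
      have hqq : ((q' : ↥J) : ℝ) = q := rfl
      linarith
    · -- symmetric: take a point slightly below r
      have hq : ∃ q ∈ J, q < (r:ℝ) ∧ (r:ℝ) - q < ε := by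
        refine ⟨max t₁ ((r:ℝ) - ε/2), ?_, ?_, ?_⟩
        · exact hJoc.out ht₁ hrJ ⟨le_max_left _ _, max_le (le_of_lt hlt₁) (by linarith)⟩
        · exact max_lt hlt₁ (by linarith)
        · have := le_max_right t₁ ((r:ℝ) - ε/2); linarith
      obtain ⟨q, hqJ, hq1, hq2⟩ := hq
      set q' : ↥J := ⟨q, hqJ⟩
      have hd : dist q' r < ε := by
        rw [Subtype.dist_eq, Real.dist_eq, abs_of_neg (by simpa using hq1 : q - (r:ℝ) < 0)]
        simpa using hq2
      have := hside (g q') (hgI q') (le_of_lt (by rw [← Real.dist_eq]; exact hball hd))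
      rw [hsec q', hsec r] at this
      have hqq : ((q' : ↥J) : ℝ) = q := rfl
      linarith
  -- local propagation of equality at non-precritical values
  have hopen : ∀ r : ↥J, g r = g' r → (∀ j < n, (f s)^[j] (g r) ≠ c s) →
      ∃ ε > (0:ℝ), ∀ r' : ↥J, dist r' r < ε → g r' = g' r' := by
    intro r hgg hnc
    obtain ⟨δ, hδ, hinj⟩ := inj_iter hs hs₂ n (g r) (hgI r) hnc
    have hca : ContinuousAt g r := hgc.continuousAt
    rw [Metric.continuousAt_iff] at hca
    obtain ⟨ε₁, hε₁, hball₁⟩ := hca δ hδ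
    have hca' : ContinuousAt g' r := hg'c.continuousAt
    rw [Metric.continuousAt_iff] at hca'
    obtain ⟨ε₂, hε₂, hball₂⟩ := hca' δ hδ
    refine ⟨min ε₁ ε₂, lt_min hε₁ hε₂, ?_⟩
    intro r' hr'
    have h1 : |g r' - g r| ≤ δ := by
      rw [← Real.dist_eq]
      exact le_of_lt (hball₁ (lt_of_lt_of_le hr' (min_le_left _ _)))
    have h2 : |g' r' - g r| ≤ δ := by
      rw [← Real.dist_eq, hgg]
      exact le_of_lt (hball₂ (lt_of_lt_of_le hr' (min_le_right _ _)))
    exact hinj (g r') (hgI r') (g' r') (hg'I r') h1 h2 (by rw [hsec r', hsec' r'])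
  -- preconnectedness of non-extreme points
  have hP : IsPreconnected (npts J) := (npts_ordConn hJoc).isPreconnected
  haveI : PreconnectedSpace ↥(npts J) := Subtype.preconnectedSpace hP
  set ι : ↥(npts J) → ↥J := fun r => ⟨r.1, r.2.1⟩ with hιdef
  have hιc : Continuous ι := Continuous.subtype_mk continuous_subtype_val _
  set EP : Set ↥(npts J) := {r | g (ι r) = g' (ι r)} with hEPdef
  have hEPclosed : IsClosed EP := isClosed_eq (hgc.comp hιc) (hg'c.comp hιc)
  have hEPopen : IsOpen EP := by
    rw [Metric.isOpen_iff]
    intro r hr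
    obtain ⟨ε, hε, hloc⟩ := hopen (ι r) hr (hnpc (ι r) r.2)
    refine ⟨ε, hε, ?_⟩
    intro r' hr'
    refine hloc (ι r') ?_
    rw [Subtype.dist_eq]
    rw [Metric.mem_ball, Subtype.dist_eq] at hr'
    exact hr'
  -- EP is nonempty
  have hEPne : EP.Nonempty := by
    by_cases htP : (t:ℝ) ∈ npts J
    · exact ⟨⟨(t:ℝ), htP⟩, by simp only [hEPdef, Set.mem_setOf_eq, hιdef]; exact heq⟩
    · have htpc : (t:ℝ) ∉ PC s := ht.resolve_right htP
      have hnc : ∀ j < n, (f s)^[j] (g t) ≠ c s := by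
        apply not_precrit
        rw [hsec t]
        exact htpc
      obtain ⟨ε, hε, hloc⟩ := hopen t heq hnc
      obtain ⟨x, hxJ, y, hyJ, hxy⟩ := hJnt
      have hw : ∃ w ∈ J, w ≠ (t:ℝ) := by
        by_cases hx : x = (t:ℝ)
        · exact ⟨y, hyJ, fun h => hxy (by rw [hx, h])⟩
        · exact ⟨x, hxJ, hx⟩
      obtain ⟨w, hwJ, hwne⟩ := hw
      obtain ⟨r, hrd, hbet⟩ := pick_between (Ne.symm hwne) hε
      have hrJ : r ∈ J := by
        rcases hbet with ⟨h1, h2⟩ | ⟨h1, h2⟩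
        · exact hJoc.out t.2 hwJ ⟨le_of_lt h1, le_of_lt h2⟩
        · exact hJoc.out hwJ t.2 ⟨le_of_lt h1, le_of_lt h2⟩
      have hrP : r ∈ npts J := by
        rcases hbet with ⟨h1, h2⟩ | ⟨h1, h2⟩
        · exact ⟨hrJ, (t:ℝ), t.2, w, hwJ, h1, h2⟩
        · exact ⟨hrJ, w, hwJ, (t:ℝ), t.2, h1, h2⟩
      refine ⟨⟨r, hrP⟩, ?_⟩
      simp only [hEPdef, Set.mem_setOf_eq, hιdef]
      apply hloc
      rw [Subtype.dist_eq, Real.dist_eq]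
      exact hrd
  have hEPuniv : EP = Set.univ := IsClopen.eq_univ ⟨hEPclosed, hEPopen⟩ hEPne
  have hallP : ∀ r : ↥J, (r:ℝ) ∈ npts J → g r = g' r := by
    intro r hr
    have : (⟨(r:ℝ), hr⟩ : ↥(npts J)) ∈ EP := by rw [hEPuniv]; trivial
    simpa only [hEPdef, Set.mem_setOf_eq, hιdef] using this
  -- conclusion by density
  intro t'
  by_cases ht' : (t':ℝ) ∈ npts J
  · exact hallP t' ht'
  · have hE : IsClosed {r : ↥J | g r = g' r} := isClosed_eq hgc hg'c
    obtain ⟨x, hxJ, y, hyJ, hxy⟩ := hJnt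
    have hw : ∃ w ∈ J, w ≠ (t':ℝ) := by
      by_cases hx : x = (t':ℝ)
      · exact ⟨y, hyJ, fun h => hxy (by rw [hx, h])⟩
      · exact ⟨x, hxJ, hx⟩
    obtain ⟨w, hwJ, hwne⟩ := hw
    have hcl : t' ∈ closure {r : ↥J | g r = g' r} := by
      rw [Metric.mem_closure_iff]
      intro ε hε
      obtain ⟨r, hrd, hbet⟩ := pick_between (Ne.symm hwne) hε
      have hrJ : r ∈ J := by
        rcases hbet with ⟨h1, h2⟩ | ⟨h1, h2⟩
        · exact hJoc.out t'.2 hwJ ⟨le_of_lt h1, le_of_lt h2⟩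
        · exact hJoc.out hwJ t'.2 ⟨le_of_lt h1, le_of_lt h2⟩
      have hrP : r ∈ npts J := by
        rcases hbet with ⟨h1, h2⟩ | ⟨h1, h2⟩
        · exact ⟨hrJ, (t':ℝ), t'.2, w, hwJ, h1, h2⟩
        · exact ⟨hrJ, w, hwJ, (t':ℝ), t'.2, h1, h2⟩
      refine ⟨⟨r, hrJ⟩, hallP _ hrP, ?_⟩
      rw [Subtype.dist_eq, Real.dist_eq, abs_sub_comm]
      exact hrd
    rw [hE.closure_eq] at hcl
    exact hcl

end Sections
/-! ### Bounded-variation estimate over disjoint intervals -/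

section BV

lemma sep_uIcc {v w v' w' : ℝ} (hd : Disjoint (Set.uIcc v w) (Set.uIcc v' w'))
    (hlt : v < v') : ∀ q ∈ Set.uIcc v w, ∀ q' ∈ Set.uIcc v' w', q < q' := by
  have hdis : ∀ x : ℝ, x ∈ Set.uIcc v w → x ∉ Set.uIcc v' w' := fun x hx =>
    Set.disjoint_left.1 hd hx
  have h1 : w < v' := by
    by_contra h
    push_neg at h
    exact hdis v' (Set.mem_uIcc.2 (Or.inl ⟨le_of_lt hlt, h⟩)) Set.left_mem_uIcc
  have h2 : v < w' := by
    by_contra h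
    push_neg at h
    exact hdis v Set.left_mem_uIcc (Set.mem_uIcc.2 (Or.inr ⟨h, le_of_lt hlt⟩))
  have h3 : w < w' := by
    by_contra h
    push_neg at h
    rcases le_or_gt v w' with h4 | h4
    · exact hdis w' (Set.mem_uIcc.2 (Or.inl ⟨h4, h⟩)) Set.right_mem_uIcc
    · linarith
  intro q hq q' hq'
  rcases Set.mem_uIcc.1 hq with ⟨_, hqb⟩ | ⟨_, hqb⟩ <;>
    rcases Set.mem_uIcc.1 hq' with ⟨hq'a, _⟩ | ⟨hq'a, _⟩ <;> linarith

lemma bvsum (φ : ℝ → ℝ) (T : Finset ℝ) (j : ℝ → ℝ)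
    (hmem : ∀ v ∈ T, v ∈ I ∧ j v ∈ I)
    (hdisj : ∀ v ∈ T, ∀ w ∈ T, v ≠ w → Disjoint (Set.uIcc v (j v)) (Set.uIcc w (j w))) :
    ∑ v ∈ T, edist (φ (j v)) (φ v) ≤ eVariationOn φ I := by
  have main : ∀ T' : Finset ℝ,
      (∀ v ∈ T', ∀ w ∈ T', v ≠ w → Disjoint (Set.uIcc v (j v)) (Set.uIcc w (j w))) →
      ∑ v ∈ T', edist (φ (j v)) (φ v) ≤
        eVariationOn φ (⋃ v ∈ (T' : Set ℝ), Set.uIcc v (j v)) := by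
    intro T'
    induction T' using Finset.induction_on_min with
    | empty => intro _; simp
    | insert a S hmin ih =>
      intro hd
      have haS : a ∉ S := fun h => absurd (hmin a h) (lt_irrefl a)
      rw [Finset.sum_insert haS]
      have hd' : ∀ v ∈ S, ∀ w ∈ S, v ≠ w →
          Disjoint (Set.uIcc v (j v)) (Set.uIcc w (j w)) := by
        intro v hv w hw hvw
        exact hd v (Finset.mem_insert_of_mem hv) w (Finset.mem_insert_of_mem hw) hvw
      have hle : ∀ x ∈ Set.uIcc a (j a), ∀ y ∈ ⋃ v ∈ (S : Set ℝ), Set.uIcc v (j v),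
          x ≤ y := by
        intro x hx y hy
        simp only [Set.mem_iUnion] at hy
        obtain ⟨v, hv, hyv⟩ := hy
        have hav : a ≠ v := fun h => haS (h ▸ hv)
        have := sep_uIcc (hd a (Finset.mem_insert_self a S) v
          (Finset.mem_insert_of_mem hv) hav) (hmin v hv)
        exact le_of_lt (this x hx y hyv)
      calc edist (φ (j a)) (φ a) + ∑ v ∈ S, edist (φ (j v)) (φ v)
          ≤ eVariationOn φ (Set.uIcc a (j a)) +
            eVariationOn φ (⋃ v ∈ (S : Set ℝ), Set.uIcc v (j v)) := by
            gcongr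
            · exact eVariationOn.edist_le φ Set.right_mem_uIcc Set.left_mem_uIcc
            · exact ih hd'
        _ ≤ eVariationOn φ (Set.uIcc a (j a) ∪ ⋃ v ∈ (S : Set ℝ), Set.uIcc v (j v)) :=
            eVariationOn.add_le_union φ hle
        _ = eVariationOn φ (⋃ v ∈ ((insert a S : Finset ℝ) : Set ℝ), Set.uIcc v (j v)) := by
            congr 1
            simp only [Finset.coe_insert, Set.biUnion_insert]
  refine le_trans (main T hdisj) (eVariationOn.mono φ ?_)
  intro x hx
  simp only [Set.mem_iUnion] at hx
  obtain ⟨v, hv, hxv⟩ := hx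
  exact Set.ordConnected_Icc.uIcc_subset (hmem v hv).1 (hmem v hv).2 hxv

end BV
/-- holonomy invariance of `α` in `0`-boxes: if `B` is a `0`-box over
`J` (with Borel fibers), then `α_a(B) = α_b(B)` for all `a, b ∈ J ∖ PC`. -/
theorem holonomy_invariance (s : ℝ) (hs₁ : Real.sqrt 2 < s) (hs₂ : s < 2)
    (φ : ℝ → ℝ)
    (hφpos : ∀ x ∈ I \ PC s, 0 < φ x)
    (hφbv : BoundedVariationOn φ I)
    (hφeq : ∀ x ∈ I \ PC s, ∀ n : ℕ,
      φ x = ∑' y : {y : ℝ // y ∈ I ∧ (f s)^[n] y = x}, φ y.1 / s ^ n)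
    (μ : Measure ℝ) (hμprob : IsProbabilityMeasure μ) (hμerg : Ergodic (f s) μ)
    (hμdens : μ = (volume.restrict I).withDensity fun x => ENNReal.ofReal (φ x))
    (α : ℝ → Measure (Ihat s))
    (hαsupp : ∀ x ∈ I \ PC s, α x {z : Ihat s | z.1 0 ≠ x} = 0)
    (hαcyl : ∀ x ∈ I \ PC s, ∀ (y : ℕ → ℝ) (n : ℕ), y 0 = x →
      (∀ i ≤ n, y i ∈ I) → (∀ i < n, f s (y (i + 1)) = y i) →
      α x (pointCyl s y n) = ENNReal.ofReal (φ (y n) / s ^ n))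
    (J : Set ℝ) (hJI : J ⊆ I) (hJoc : J.OrdConnected) (hJnt : J.Nontrivial)
    (B : Set (Ihat s)) (hB : ZeroBoxOver s B J)
    (hBfib : ∀ x ∈ J \ PC s, MeasurableSet (B ∩ {z : Ihat s | z.1 0 = x}))
    (a b : ℝ) (ha : a ∈ J \ PC s) (hb : b ∈ J \ PC s) :
    α a B = α b B := by
  classical
  have hs : 1 < s := one_lt_s hs₁
  have hs0 : (0:ℝ) < s := by linarith
  obtain ⟨A, hA, rfl⟩ := hB
  -- arc data
  have hedata : ∀ γ : ↥A, ∃ e : ↥γ.1 ≃ₜ ↥J, ∀ x : ↥γ.1, ((e x) : ℝ) = x.1.1 0 :=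
    fun γ => (hA γ.1 γ.2).2.2.2
  choose e he using hedata
  set p : ↥A → ↥J → Ihat s := fun γ t => (((e γ).symm t : ↥γ.1) : Ihat s) with hpdef
  have hp0 : ∀ γ t, (p γ t).1 0 = (t:ℝ) := by
    intro γ t
    have h1 := he γ ((e γ).symm t)
    rw [Homeomorph.apply_symm_apply] at h1
    exact h1.symm
  have hpmem : ∀ γ t, p γ t ∈ γ.1 := fun γ t => ((e γ).symm t).2
  have hpcont : ∀ γ, Continuous (p γ) :=
    fun γ => continuous_subtype_val.comp (e γ).symm.continuous
  have hpuniq : ∀ (γ : ↥A) (z : Ihat s), z ∈ γ.1 → ∀ t : ↥J, z.1 0 = (t:ℝ) → z = p γ t := by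
    intro γ z hz t h
    have h1 : ((e γ ⟨z, hz⟩ : ↥J) : ℝ) = (t:ℝ) := by rw [he γ ⟨z, hz⟩]; exact h
    have h2 : e γ ⟨z, hz⟩ = t := Subtype.ext h1
    have h3 : (⟨z, hz⟩ : ↥γ.1) = (e γ).symm t := by
      rw [← h2, Homeomorph.symm_apply_apply]
    exact congrArg Subtype.val h3
  have hpI : ∀ (γ : ↥A) (t : ↥J) (n : ℕ), (p γ t).1 n ∈ I := fun γ t n => (p γ t).2.1 n
  have hpsec : ∀ (γ : ↥A) (t : ↥J) (n : ℕ), (f s)^[n] ((p γ t).1 n) = (t:ℝ) := by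
    intro γ t n
    have h1 := coord_proj (p γ t) (Nat.zero_le n)
    rw [Nat.sub_zero] at h1
    rw [h1, hp0]
  have hkeyuniq : ∀ (γ γ' : ↥A) (n : ℕ) (t : ↥J),
      ((t:ℝ) ∉ PC s ∨ (t:ℝ) ∈ npts J) → (p γ t).1 n = (p γ' t).1 n →
      ∀ t' : ↥J, (p γ t').1 n = (p γ' t').1 n :=
    fun γ γ' n t ht h =>
      section_eq hs hs₂ hJoc hJnt (hpcont γ) (hpcont γ') (hp0 γ) (hp0 γ') n t ht h
  -- total mass bound
  have hfin : ∀ x ∈ J \ PC s, ∀ X : Set (Ihat s), α x X ≤ ENNReal.ofReal (φ x) := by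
    intro x hx X
    have hxI : x ∈ I \ PC s := ⟨hJI hx.1, hx.2⟩
    calc α x X ≤ α x (cylv s 0 x ∪ {z : Ihat s | z.1 0 ≠ x}) := by
          apply measure_mono
          intro z _
          by_cases h : z.1 0 = x
          · exact Or.inl h
          · exact Or.inr h
      _ ≤ α x (cylv s 0 x) + α x {z : Ihat s | z.1 0 ≠ x} := measure_union_le _ _
      _ = ENNReal.ofReal (φ x) := by
          rw [hαsupp x hxI, add_zero,
            measure_cylv hs hs₂ hαcyl hxI hxI.1 0 (by simp)]
          simp
  -- it suffices to prove one inequality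
  suffices key : ∀ a' b', a' ∈ J \ PC s → b' ∈ J \ PC s →
      α b' (⋃₀ A) ≤ α a' (⋃₀ A) by
    exact le_antisymm (key b a hb ha) (key a b ha hb)
  clear ha hb
  intro a b ha hb
  have haI : a ∈ I \ PC s := ⟨hJI ha.1, ha.2⟩
  have hbI : b ∈ I \ PC s := ⟨hJI hb.1, hb.2⟩
  set ta : ↥J := ⟨a, ha.1⟩ with htadef
  set tb : ↥J := ⟨b, hb.1⟩ with htbdef
  haveI : IsFiniteMeasure (α b) :=
    ⟨lt_of_le_of_lt (hfin b hb _) ENNReal.ofReal_lt_top⟩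
  -- ε-argument
  refine ENNReal.le_of_forall_pos_le_add ?_
  intro ε hε _
  have hε' : (ε : ℝ≥0∞) ≠ 0 := by
    simpa using (ENNReal.coe_ne_zero.2 (ne_of_gt hε))
  set Fb : Set (Ihat s) := (⋃₀ A) ∩ {z : Ihat s | z.1 0 = b} with hFbdef
  have hFbmeas : MeasurableSet Fb := hBfib b hb
  obtain ⟨C, hCsub, hCclosed, hCmeas⟩ :=
    hFbmeas.exists_isClosed_lt_add (μ := α b) (measure_ne_top (α b) Fb) hε'
  set AC : Set ↥A := {γ : ↥A | p γ tb ∈ C} with hACdef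
  set V : ℕ → ↥J → Set ℝ := fun n t => (fun γ : ↥A => (p γ t).1 n) '' AC with hVdef
  have hVfin : ∀ (n : ℕ) (t : ↥J), (V n t).Finite := by
    intro n t
    apply Set.Finite.subset (preim_finite hs0 (t:ℝ) n)
    rintro v ⟨γ, _, rfl⟩
    exact hpsec γ t n
  set W : ℕ → ↥J → Set (Ihat s) := fun n t => {z : Ihat s | z.1 n ∈ V n t} with hWdef
  have hWeq : ∀ (n : ℕ) (t : ↥J), W n t = ⋃ v ∈ (hVfin n t).toFinset, cylv s n v := by
    intro n t
    ext z
    simp only [hWdef, Set.mem_setOf_eq, Set.mem_iUnion, Set.Finite.mem_toFinset, cylv]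
    constructor
    · intro h; exact ⟨z.1 n, h, rfl⟩
    · rintro ⟨v, hv, h⟩; rw [show z.1 n = v from h]; exact hv
  have hWmeas : ∀ (n : ℕ) (t : ↥J), MeasurableSet (W n t) := by
    intro n t
    rw [hWeq]
    exact (hVfin n t).toFinset.measurableSet_biUnion (fun v _ => cylv_meas n v)
  have hWval : ∀ (n : ℕ) (t : ↥J), (t:ℝ) ∈ J \ PC s →
      α (t:ℝ) (W n t) = ∑ v ∈ (hVfin n t).toFinset, ENNReal.ofReal (φ v / s ^ n) := by
    intro n t htx
    have hxI : (t:ℝ) ∈ I \ PC s := ⟨hJI htx.1, htx.2⟩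
    rw [hWeq, measure_biUnion_finset ?_ (fun v _ => cylv_meas n v)]
    · apply Finset.sum_congr rfl
      intro v hv
      rw [Set.Finite.mem_toFinset] at hv
      obtain ⟨γ, _, rfl⟩ := hv
      exact measure_cylv hs hs₂ hαcyl hxI (hpI γ t n) n (hpsec γ t n)
    · intro v _ w _ hvw
      simp only [Function.onFun]
      apply Set.disjoint_left.2
      intro z hz1 hz2
      exact hvw (by rw [← hz1, ← hz2] : v = w)
  have hWanti : ∀ t : ↥J, Antitone (fun n => W n t) := by
    intro t
    apply antitone_nat_of_succ_le
    intro n z hz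
    simp only [hWdef, Set.mem_setOf_eq, hVdef, Set.mem_image] at hz ⊢
    obtain ⟨γ, hγ, hcoord⟩ := hz
    refine ⟨γ, hγ, ?_⟩
    have h1 : f s ((p γ t).1 (n+1)) = (p γ t).1 n := (p γ t).2.2 n
    have h2 : f s (z.1 (n+1)) = z.1 n := z.2.2 n
    rw [← h1, hcoord, h2]
  have hCW : ∀ n : ℕ, C ⊆ W n tb := by
    intro n z hz
    obtain ⟨hzB, hz0⟩ := hCsub hz
    obtain ⟨γ₀, hγ₀A, hzγ₀⟩ := hzB
    have hzp : z = p ⟨γ₀, hγ₀A⟩ tb := hpuniq ⟨γ₀, hγ₀A⟩ z hzγ₀ tb hz0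
    have hγAC : (⟨γ₀, hγ₀A⟩ : ↥A) ∈ AC := by
      simp only [hACdef, Set.mem_setOf_eq]; rw [← hzp]; exact hz
    simp only [hWdef, Set.mem_setOf_eq, hVdef, Set.mem_image]
    exact ⟨⟨γ₀, hγ₀A⟩, hγAC, by rw [← hzp]⟩
  -- the key inclusion
  have hKEY : (⋂ n, W n ta) ⊆ ⋃₀ A := by
    intro z hz
    have hz' : ∀ n : ℕ, ∃ γ : ↥A, γ ∈ AC ∧ (p γ ta).1 n = z.1 n := by
      intro n
      have h1 := Set.mem_iInter.1 hz n
      simp only [hWdef, Set.mem_setOf_eq, hVdef, Set.mem_image] at h1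
      obtain ⟨γ, hγ, hc⟩ := h1
      exact ⟨γ, hγ, hc⟩
    choose gA hgAC hgeq using hz'
    have hclaim1 : ∀ m n : ℕ, m ≤ n → (p (gA n) ta).1 m = z.1 m := by
      intro m n hmn
      have h1 := coord_proj (p (gA n) ta) hmn
      have h2 := coord_proj z hmn
      rw [← h1, hgeq n, h2]
    have hclaim2 : ∀ m n : ℕ, m ≤ n → (p (gA n) tb).1 m = (p (gA m) tb).1 m := by
      intro m n hmn
      have h0 : (p (gA n) ta).1 m = (p (gA m) ta).1 m := by
        rw [hclaim1 m n hmn, hclaim1 m m le_rfl]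
      exact hkeyuniq (gA n) (gA m) m ta (Or.inl ha.2) h0 tb
    set w : ℕ → ℝ := fun m => (p (gA m) tb).1 m with hwdef
    have hwmem : ∀ m, w m ∈ I := fun m => hpI _ _ _
    have hwrel : ∀ m, f s (w (m+1)) = w m := by
      intro m
      have h1 : f s ((p (gA (m+1)) tb).1 (m+1)) = (p (gA (m+1)) tb).1 m :=
        (p (gA (m+1)) tb).2.2 m
      simp only [hwdef]
      rw [h1, hclaim2 m (m+1) (by omega)]
    set Wpt : Ihat s := ⟨w, hwmem, hwrel⟩ with hWptdef
    have hlim : Filter.Tendsto (fun m => p (gA m) tb) Filter.atTop (nhds Wpt) := by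
      rw [IsEmbedding.subtypeVal.tendsto_nhds_iff]
      rw [tendsto_pi_nhds]
      intro i
      apply tendsto_atTop_of_eventually_const (i₀ := i)
      intro m hm
      exact hclaim2 i m hm
    have hWC : Wpt ∈ C :=
      hCclosed.mem_of_tendsto hlim (Filter.Eventually.of_forall (fun m => hgAC m))
    obtain ⟨hWB, _⟩ := hCsub hWC
    obtain ⟨γ₀, hγ₀A, hWγ₀⟩ := hWB
    have hW0 : Wpt.1 0 = (tb:ℝ) := by
      show w 0 = b
      simp only [hwdef]
      exact hp0 (gA 0) tb
    have hWp : Wpt = p ⟨γ₀, hγ₀A⟩ tb := hpuniq ⟨γ₀, hγ₀A⟩ Wpt hWγ₀ tb hW0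
    have hzeq : ∀ m, (p (⟨γ₀, hγ₀A⟩ : ↥A) ta).1 m = z.1 m := by
      intro m
      have h1 : (p (⟨γ₀, hγ₀A⟩ : ↥A) tb).1 m = (p (gA m) tb).1 m := by
        rw [← hWp]
      have h2 := hkeyuniq ⟨γ₀, hγ₀A⟩ (gA m) m tb (Or.inl hb.2) h1 ta
      rw [h2, hgeq m]
    have hzp : z = p ⟨γ₀, hγ₀A⟩ ta :=
      Subtype.ext (funext fun m => (hzeq m).symm)
    exact ⟨γ₀, hγ₀A, hzp ▸ hpmem ⟨γ₀, hγ₀A⟩ ta⟩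
  -- crossing-free intervals
  have hdisjint : ∀ (n : ℕ) (γ γ' : ↥A), (p γ ta).1 n ≠ (p γ' ta).1 n →
      Disjoint (Set.uIcc ((p γ ta).1 n) ((p γ tb).1 n))
        (Set.uIcc ((p γ' ta).1 n) ((p γ' tb).1 n)) := by
    intro n γ γ' hne
    by_contra hcon
    rw [Set.not_disjoint_iff] at hcon
    obtain ⟨r, hr1, hr2⟩ := hcon
    have hmkG : ∀ δ : ↥A, ∃ G : ℝ → ℝ, ContinuousOn G J ∧
        (∀ (x : ℝ) (h : x ∈ J), G x = (p δ ⟨x, h⟩).1 n) := by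
      intro δ
      refine ⟨fun x => if h : x ∈ J then (p δ ⟨x, h⟩).1 n else 0, ?_, ?_⟩
      · rw [continuousOn_iff_continuous_restrict]
        have hres : (J.domRestrict fun x => if h : x ∈ J then (p δ ⟨x, h⟩).1 n else 0) =
            fun t : ↥J => (p δ t).1 n := by
          funext t
          simp only [Set.domRestrict_apply]
          rw [dif_pos t.2]
        rw [hres]
        exact (continuous_apply n).comp (continuous_subtype_val.comp (hpcont δ))
      · intro x h; exact dif_pos h
    obtain ⟨G, hGcont, hGval⟩ := hmkG γ
    obtain ⟨G', hG'cont, hG'val⟩ := hmkG γ'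
    have huIccJ : Set.uIcc a b ⊆ J := hJoc.uIcc_subset ha.1 hb.1
    have hGa : G a = (p γ ta).1 n := hGval a ha.1
    have hGb : G b = (p γ tb).1 n := hGval b hb.1
    have hG'a : G' a = (p γ' ta).1 n := hG'val a ha.1
    have hG'b : G' b = (p γ' tb).1 n := hG'val b hb.1
    obtain ⟨t₀, ht₀ab, hGt₀⟩ :=
      intermediate_value_uIcc (hGcont.mono huIccJ) (by rw [hGa, hGb]; exact hr1)
    obtain ⟨t₁, ht₁ab, hG't₁⟩ :=
      intermediate_value_uIcc (hG'cont.mono huIccJ) (by rw [hG'a, hG'b]; exact hr2)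
    have ht₀J : t₀ ∈ J := huIccJ ht₀ab
    have ht₁J : t₁ ∈ J := huIccJ ht₁ab
    have hsect : (f s)^[n] r = t₀ := by
      rw [← hGt₀, hGval t₀ ht₀J]; exact hpsec γ ⟨t₀, ht₀J⟩ n
    have hsect' : (f s)^[n] r = t₁ := by
      rw [← hG't₁, hG'val t₁ ht₁J]; exact hpsec γ' ⟨t₁, ht₁J⟩ n
    have ht01 : t₀ = t₁ := by rw [← hsect, hsect']
    subst ht01
    have hgood : (t₀ ∉ PC s ∨ t₀ ∈ npts J) := by
      by_cases h1 : t₀ = a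
      · exact Or.inl (h1 ▸ ha.2)
      by_cases h2 : t₀ = b
      · exact Or.inl (h2 ▸ hb.2)
      refine Or.inr ⟨ht₀J, ?_⟩
      rcases Set.mem_uIcc.1 ht₀ab with ⟨hl, hr'⟩ | ⟨hl, hr'⟩
      · exact ⟨a, ha.1, b, hb.1, lt_of_le_of_ne hl (Ne.symm h1), lt_of_le_of_ne hr' h2⟩
      · exact ⟨b, hb.1, a, ha.1, lt_of_le_of_ne hl (Ne.symm h2), lt_of_le_of_ne hr' h1⟩
    have heqt : (p γ ⟨t₀, ht₀J⟩).1 n = (p γ' ⟨t₀, ht₀J⟩).1 n := by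
      rw [← hGval t₀ ht₀J, ← hG'val t₀ ht₀J, hGt₀, hG't₁]
    exact hne (hkeyuniq γ γ' n ⟨t₀, ht₀J⟩ hgood heqt ta)
  -- the matching map between fibres
  have hbij : ∀ n : ℕ, ∃ j : ℝ → ℝ, Set.InjOn j (V n ta) ∧ (V n tb = j '' (V n ta)) ∧
      (∀ v ∈ V n ta, ∃ γ : ↥A, γ ∈ AC ∧ (p γ ta).1 n = v ∧ (p γ tb).1 n = j v) := by
    intro n
    have hch : ∀ v, v ∈ V n ta → ∃ γ : ↥A, γ ∈ AC ∧ (p γ ta).1 n = v := by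
      intro v hv
      simp only [hVdef, Set.mem_image] at hv
      obtain ⟨γ, h1, h2⟩ := hv
      exact ⟨γ, h1, h2⟩
    set j : ℝ → ℝ := fun v => if h : v ∈ V n ta then (p (hch v h).choose tb).1 n else 0
      with hjdef
    have hjval : ∀ v (hv : v ∈ V n ta), ∀ γ : ↥A, γ ∈ AC → (p γ ta).1 n = v →
        j v = (p γ tb).1 n := by
      intro v hv γ _ hγv
      obtain ⟨hsel1, hsel2⟩ := (hch v hv).choose_spec
      have : (p (hch v hv).choose ta).1 n = (p γ ta).1 n := by rw [hsel2, hγv]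
      have h3 := hkeyuniq (hch v hv).choose γ n ta (Or.inl ha.2) this tb
      simp only [hjdef]
      rw [dif_pos hv, h3]
    refine ⟨j, ?_, ?_, ?_⟩
    · -- InjOn
      intro v hv v' hv' hjeq
      obtain ⟨γ, hγ1, hγ2⟩ := hch v hv
      obtain ⟨γ', hγ'1, hγ'2⟩ := hch v' hv'
      rw [hjval v hv γ hγ1 hγ2, hjval v' hv' γ' hγ'1 hγ'2] at hjeq
      have := hkeyuniq γ γ' n tb (Or.inl hb.2) hjeq ta
      rw [← hγ2, ← hγ'2, this]
    · -- image equality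
      apply Set.eq_of_subset_of_subset
      · rintro w ⟨γ, hγ, rfl⟩
        have hvmem : (p γ ta).1 n ∈ V n ta := ⟨γ, hγ, rfl⟩
        exact ⟨(p γ ta).1 n, hvmem, hjval _ hvmem γ hγ rfl⟩
      · rintro w ⟨v, hv, rfl⟩
        obtain ⟨γ, hγ1, hγ2⟩ := hch v hv
        rw [hjval v hv γ hγ1 hγ2]
        exact ⟨γ, hγ1, rfl⟩
    · intro v hv
      obtain ⟨γ, hγ1, hγ2⟩ := hch v hv
      exact ⟨γ, hγ1, hγ2, (hjval v hv γ hγ1 hγ2).symm⟩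
  -- per-level measure comparison
  set rr : ℝ≥0∞ := ENNReal.ofReal (1/s) with hrrdef
  have hbound : ∀ n : ℕ, α b (W n tb) ≤ α a (W n ta) + eVariationOn φ I * rr ^ n := by
    intro n
    obtain ⟨j, hjinj, hjim, hjspec⟩ := hbij n
    have h1 : α b (W n tb) = ∑ v ∈ (hVfin n tb).toFinset, ENNReal.ofReal (φ v / s ^ n) :=
      hWval n tb hb
    have h2 : α a (W n ta) = ∑ v ∈ (hVfin n ta).toFinset, ENNReal.ofReal (φ v / s ^ n) :=
      hWval n ta ha
    rw [h1, h2]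
    have hsetrw : (hVfin n tb).toFinset = ((hVfin n ta).toFinset).image j := by
      apply Finset.coe_injective
      rw [Finset.coe_image, Set.Finite.coe_toFinset, Set.Finite.coe_toFinset, hjim]
    rw [hsetrw, Finset.sum_image (by
      intro x hx y hy hxy
      exact hjinj ((Set.Finite.mem_toFinset _).1 hx) ((Set.Finite.mem_toFinset _).1 hy) hxy)]
    have hterm : ∀ v ∈ (hVfin n ta).toFinset,
        ENNReal.ofReal (φ (j v) / s ^ n) ≤
          ENNReal.ofReal (φ v / s ^ n) + edist (φ (j v)) (φ v) * rr ^ n := by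
      intro v hv
      have hsn : (0:ℝ) < s ^ n := by positivity
      have hre : φ (j v) / s ^ n ≤ φ v / s ^ n + |φ (j v) - φ v| / s ^ n := by
        rw [← add_div]
        apply div_le_div_of_nonneg_right ?_ hsn.le
        have := le_abs_self (φ (j v) - φ v)
        linarith
      calc ENNReal.ofReal (φ (j v) / s ^ n)
          ≤ ENNReal.ofReal (φ v / s ^ n + |φ (j v) - φ v| / s ^ n) :=
            ENNReal.ofReal_le_ofReal hre
        _ ≤ ENNReal.ofReal (φ v / s ^ n) + ENNReal.ofReal (|φ (j v) - φ v| / s ^ n) :=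
            ENNReal.ofReal_add_le
        _ = ENNReal.ofReal (φ v / s ^ n) + edist (φ (j v)) (φ v) * rr ^ n := by
            congr 1
            rw [edist_dist, Real.dist_eq, hrrdef, ← ENNReal.ofReal_pow (by positivity),
              ← ENNReal.ofReal_mul (abs_nonneg _)]
            congr 1
            rw [div_eq_mul_inv, one_div, inv_pow]
    have hmem' : ∀ v ∈ (hVfin n ta).toFinset, v ∈ I ∧ j v ∈ I := by
      intro v hv
      obtain ⟨γ, _, hγ2, hγ3⟩ := hjspec v ((Set.Finite.mem_toFinset _).1 hv)
      exact ⟨hγ2 ▸ hpI γ ta n, hγ3 ▸ hpI γ tb n⟩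
    have hdisj' : ∀ v ∈ (hVfin n ta).toFinset, ∀ w ∈ (hVfin n ta).toFinset, v ≠ w →
        Disjoint (Set.uIcc v (j v)) (Set.uIcc w (j w)) := by
      intro v hv w hw hvw
      obtain ⟨γ, _, hγ2, hγ3⟩ := hjspec v ((Set.Finite.mem_toFinset _).1 hv)
      obtain ⟨γ', _, hγ'2, hγ'3⟩ := hjspec w ((Set.Finite.mem_toFinset _).1 hw)
      rw [← hγ3, ← hγ'3, ← hγ2, ← hγ'2]
      apply hdisjint n γ γ'
      rw [hγ2, hγ'2]
      exact hvw
    calc ∑ v ∈ (hVfin n ta).toFinset, ENNReal.ofReal (φ (j v) / s ^ n)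
        ≤ ∑ v ∈ (hVfin n ta).toFinset,
            (ENNReal.ofReal (φ v / s ^ n) + edist (φ (j v)) (φ v) * rr ^ n) :=
          Finset.sum_le_sum hterm
      _ = (∑ v ∈ (hVfin n ta).toFinset, ENNReal.ofReal (φ v / s ^ n)) +
            (∑ v ∈ (hVfin n ta).toFinset, edist (φ (j v)) (φ v)) * rr ^ n := by
          rw [Finset.sum_add_distrib, Finset.sum_mul]
      _ ≤ (∑ v ∈ (hVfin n ta).toFinset, ENNReal.ofReal (φ v / s ^ n)) +
            eVariationOn φ I * rr ^ n := by
          gcongr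
          exact bvsum φ _ j hmem' hdisj'
  -- limits and conclusion
  have htend : Filter.Tendsto (fun n => α a (W n ta)) Filter.atTop
      (nhds (α a (⋂ n, W n ta))) :=
    tendsto_measure_iInter_atTop (fun n => (hWmeas n ta).nullMeasurableSet) (hWanti ta)
      ⟨0, ne_of_lt (lt_of_le_of_lt (hfin a ha _) ENNReal.ofReal_lt_top)⟩
  have hrrlt : rr < 1 := by
    rw [hrrdef, ENNReal.ofReal_lt_one, div_lt_one hs0]
    exact hs
  have hgeom : Filter.Tendsto (fun n : ℕ => eVariationOn φ I * rr ^ n)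
      Filter.atTop (nhds 0) := by
    have h1 := ENNReal.tendsto_pow_atTop_nhds_zero_of_lt_one hrrlt
    have h2 := ENNReal.Tendsto.const_mul h1 (Or.inr hφbv)
    simpa using h2
  have htend2 : Filter.Tendsto (fun n => α a (W n ta) + eVariationOn φ I * rr ^ n)
      Filter.atTop (nhds (α a (⋂ n, W n ta))) := by
    have h3 := htend.add hgeom
    simpa using h3
  have hCle : α b C ≤ α a (⋂ n, W n ta) := by
    refine ge_of_tendsto htend2 (Filter.Eventually.of_forall fun n => ?_)
    exact le_trans (measure_mono (hCW n)) (hbound n)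
  calc α b (⋃₀ A) ≤ α b (Fb ∪ {z : Ihat s | z.1 0 ≠ b}) := by
        apply measure_mono
        intro z hz
        by_cases h : z.1 0 = b
        · exact Or.inl ⟨hz, h⟩
        · exact Or.inr h
    _ ≤ α b Fb + α b {z : Ihat s | z.1 0 ≠ b} := measure_union_le _ _
    _ = α b Fb := by rw [hαsupp b hbI, add_zero]
    _ ≤ α b C + ε := le_of_lt hCmeas
    _ ≤ α a (⋂ n, W n ta) + ε := add_le_add hCle le_rfl
    _ ≤ α a (⋃₀ A) + ε := add_le_add (measure_mono hKEY) le_rfl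
end Tent
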